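/- Let d ≥ 3 and m ≥ 1 be integers, and let l_1 be a subdegree sequence whose distinct entries are r_1 > r_2 > ⋯ > r_m with multiplicities k_1,…,k_m, such that r_i > 1 and R(r_i^{k_i}, d) ≥ 1 for every 1 ≤ i ≤ m (where r_i^{k_i} denotes the subdegree sequence consisting of k_i copies of r_i). Then R(l_1,d) ≤ R(l′_1,d), where: l′_1 = (4) if v(l_1) = 4 and d = 3; l′_1 consists of v(l_1)/2 copies of 2 if v(l_1) is even and (v(l_1),d) ≠ (4,3); and l′_1 consists of (v(l_1)−1)/2 copies of 2 if v(l_1) is odd. In particular, if v(l_1) ≥ 28, then R(l_1,d) < 1. -/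

import Mathlib

/-- Collins' function `JC`: the maximal order of a finite primitive subgroup of
`PGL(r,ℂ)`. -/
def JC : ℕ → ℕ
  | 1 => 1
  | 2 => 60
  | 3 => 360
  | 4 => 25920
  | 5 => 25920
  | 6 => 6531840
  | 7 => 1451520
  | 8 => 348364800
  | 9 => 4199040
  | 12 => 448345497600
  | r => (r + 1).factorial

/-- A subdegree sequence, recorded as the multiset of its entries: it must be nonempty
and all entries must be positive. -/
def IsSubdegreeSeq (l : Multiset ℕ) : Prop := l ≠ 0 ∧ ∀ x ∈ l, 0 < x

/-- The Fermat-test ratio `R(l,d)`. -/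
def FTR (l : Multiset ℕ) (d : ℕ) : ℚ :=
  ((d ^ (Multiset.card l) * (l.map JC).prod
      * ∏ x ∈ l.toFinset, (l.count x).factorial : ℕ) : ℚ)
    / ((d ^ l.sum * l.sum.factorial : ℕ) : ℚ)

lemma JC_thirteen (n : ℕ) : JC (n + 13) = (n + 14).factorial := rfl

/-- multinomial-type lower bound for factorials -/
lemma factA (k : ℕ) (hk : 1 ≤ k) :
    ∀ r, 1 ≤ r → k.factorial * (r.factorial) ^ k ≤ (r * k).factorial := by
  intro r hr
  induction r, hr using Nat.le_induction with
  | base => simpa using Nat.le_refl _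
  | succ r hr ih =>
    calc k.factorial * ((r + 1).factorial) ^ k
        = k.factorial * (r.factorial) ^ k * (r + 1) ^ k := by
          rw [Nat.factorial_succ, mul_pow]; ring
      _ ≤ (r * k).factorial * (r * k + 1) ^ k := by
          exact Nat.mul_le_mul ih (Nat.pow_le_pow_left (by nlinarith) k)
      _ ≤ (r * k + k).factorial := Nat.factorial_mul_pow_le_factorial
      _ = ((r + 1) * k).factorial := by ring_nf

lemma factA' (k : ℕ) (hk : 1 ≤ k) :
    ∀ r, 1 ≤ r → k.factorial * ((k + 1) ^ (r - 1)) ^ k ≤ (r * k).factorial := by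
  intro r hr
  induction r, hr using Nat.le_induction with
  | base => simpa using Nat.le_refl _
  | succ r hr ih =>
    have h1 : r + 1 - 1 = (r - 1) + 1 := by omega
    calc k.factorial * ((k + 1) ^ (r + 1 - 1)) ^ k
        = k.factorial * ((k + 1) ^ (r - 1)) ^ k * (k + 1) ^ k := by
          rw [h1, pow_succ, mul_pow]; ring
      _ ≤ (r * k).factorial * (r * k + 1) ^ k := by
          exact Nat.mul_le_mul ih (Nat.pow_le_pow_left (by nlinarith) k)
      _ ≤ (r * k + k).factorial := Nat.factorial_mul_pow_le_factorial
      _ = ((r + 1) * k).factorial := by ring_nf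

lemma pow_base_bound {a b n c : ℕ} (hn : n ≠ 0) (h : a ^ n ≤ b) (hc : b < c ^ n) : a < c := by
  by_contra hca
  push_neg at hca
  exact absurd (Nat.pow_le_pow_left hca n) (by omega)

lemma dec2 : ∀ k < 20, 3 ^ (k * 1) * (2 * k).factorial ≤ JC 2 ^ k * k.factorial → k < 14 := by decide
lemma dec3 : ∀ k < 6, 3 ^ (k * 2) * (3 * k).factorial ≤ JC 3 ^ k * k.factorial → k < 4 := by decide
lemma dec4 : ∀ k < 9, 3 ^ (k * 3) * (4 * k).factorial ≤ JC 4 ^ k * k.factorial → k < 4 := by decide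
lemma dec5 : ∀ k < 4, 3 ^ (k * 4) * (5 * k).factorial ≤ JC 5 ^ k * k.factorial → k < 2 := by decide
lemma dec6 : ∀ k < 7, 3 ^ (k * 5) * (6 * k).factorial ≤ JC 6 ^ k * k.factorial → k < 3 := by decide
lemma dec8 : ∀ k < 5, 3 ^ (k * 7) * (8 * k).factorial ≤ JC 8 ^ k * k.factorial → k < 2 := by decide

lemma classify (r k : ℕ) (hr : 2 ≤ r) (hk : 1 ≤ k)
    (h : 3 ^ (k * (r - 1)) * (r * k).factorial ≤ JC r ^ k * k.factorial) :
    (r = 2 ∧ k < 14) ∨ (r = 3 ∧ k < 4) ∨ (r = 4 ∧ k < 4) ∨ (r = 5 ∧ k < 2) ∨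
      (r = 6 ∧ k < 3) ∨ (r = 8 ∧ k < 2) := by
  have hkne : k ≠ 0 := by omega
  -- derive (3^(r-1) * r!)^k ≤ JC r ^ k
  have hJ : 3 ^ (r - 1) * r.factorial ≤ JC r := by
    have h1 : (3 ^ (r - 1) * r.factorial) ^ k * k.factorial ≤ JC r ^ k * k.factorial := by
      calc (3 ^ (r - 1) * r.factorial) ^ k * k.factorial
          = 3 ^ (k * (r - 1)) * (k.factorial * (r.factorial) ^ k) := by
            rw [mul_pow, ← pow_mul]; ring_nf
        _ ≤ 3 ^ (k * (r - 1)) * (r * k).factorial := by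
            exact Nat.mul_le_mul_left _ (factA k hk r (by omega))
        _ ≤ JC r ^ k * k.factorial := h
    have h2 : (3 ^ (r - 1) * r.factorial) ^ k ≤ JC r ^ k :=
      Nat.le_of_mul_le_mul_right h1 (Nat.factorial_pos k)
    exact (Nat.pow_le_pow_iff_left hkne).mp h2
  have hK : 3 ^ (r - 1) * (k + 1) ^ (r - 1) ≤ JC r := by
    have h1 : (3 ^ (r - 1) * (k + 1) ^ (r - 1)) ^ k * k.factorial ≤ JC r ^ k * k.factorial := by
      calc (3 ^ (r - 1) * (k + 1) ^ (r - 1)) ^ k * k.factorial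
          = 3 ^ (k * (r - 1)) * (k.factorial * ((k + 1) ^ (r - 1)) ^ k) := by
            rw [mul_pow, ← pow_mul]; ring_nf
        _ ≤ 3 ^ (k * (r - 1)) * (r * k).factorial := by
            exact Nat.mul_le_mul_left _ (factA' k hk r (by omega))
        _ ≤ JC r ^ k * k.factorial := h
    have h2 := Nat.le_of_mul_le_mul_right h1 (Nat.factorial_pos k)
    exact (Nat.pow_le_pow_iff_left hkne).mp h2
  have hK' : (3 * (k + 1)) ^ (r - 1) ≤ JC r := by rwa [mul_pow]
  -- rule out r ≥ 13
  have hr13 : r < 13 := by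
    by_contra h13
    push_neg at h13
    obtain ⟨n, rfl⟩ : ∃ n, r = n + 13 := ⟨r - 13, by omega⟩
    rw [JC_thirteen] at hJ
    rw [Nat.factorial_succ (n + 13)] at hJ
    have h6 : n + 13 - 1 = n + 12 := by omega
    rw [h6] at hJ
    have h3 : 3 ^ (n + 12) ≤ n + 14 :=
      Nat.le_of_mul_le_mul_right hJ (Nat.factorial_pos _)
    have h4 : n + 10 < 3 ^ (n + 10) := Nat.lt_pow_self (by norm_num : 1 < 3)
    have h5 : 3 ^ (n + 12) = 9 * 3 ^ (n + 10) := by ring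
    rw [h5] at h3
    linarith
  interval_cases r
  · -- r = 2
    have hb : k < 20 := by
      have : 3 * (k + 1) < 63 := pow_base_bound (n := 1) (by omega) hK' (by decide)
      omega
    exact Or.inl ⟨rfl, dec2 k hb h⟩
  · have hb : k < 6 := by
      have : 3 * (k + 1) < 19 := pow_base_bound (n := 2) (by omega) hK' (by decide)
      omega
    exact Or.inr (Or.inl ⟨rfl, dec3 k hb h⟩)
  · have hb : k < 9 := by
      have : 3 * (k + 1) < 30 := pow_base_bound (n := 3) (by omega) hK' (by decide)
      omega
    exact Or.inr (Or.inr (Or.inl ⟨rfl, dec4 k hb h⟩))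
  · have hb : k < 4 := by
      have : 3 * (k + 1) < 13 := pow_base_bound (n := 4) (by omega) hK' (by decide)
      omega
    exact Or.inr (Or.inr (Or.inr (Or.inl ⟨rfl, dec5 k hb h⟩)))
  · have hb : k < 7 := by
      have : 3 * (k + 1) < 24 := pow_base_bound (n := 5) (by omega) hK' (by decide)
      omega
    exact Or.inr (Or.inr (Or.inr (Or.inr (Or.inl ⟨rfl, dec6 k hb h⟩))))
  · exact absurd hJ (by decide)
  · have hb : k < 5 := by
      have : 3 * (k + 1) < 17 := pow_base_bound (n := 7) (by omega) hK' (by decide)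
      omega
    exact Or.inr (Or.inr (Or.inr (Or.inr (Or.inr ⟨rfl, dec8 k hb h⟩))))
  · exact absurd hJ (by decide)
  · exact absurd hJ (by decide)
  · exact absurd hJ (by decide)
  · exact absurd hJ (by decide)
set_option synthInstance.maxSize 5000 in
set_option synthInstance.maxHeartbeats 2000000 in
set_option maxHeartbeats 8000000 in
lemma master : ∀ a2 < 14, ∀ a3 < 4, ∀ a4 < 4, ∀ a5 < 2, ∀ a6 < 3, ∀ a8 < 2,
    0 < (a2+a3+a4+a5+a6+a8) →
    (((2*a2+3*a3+4*a4+5*a5+6*a6+8*a8) % 2 = 0 ∧ (2*a2+3*a3+4*a4+5*a5+6*a6+8*a8) ≠ 4) →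
      (60 ^ a2 * Nat.factorial a2) * (360 ^ a3 * Nat.factorial a3) * (25920 ^ a4 * Nat.factorial a4) * (25920 ^ a5 * Nat.factorial a5) * (6531840 ^ a6 * Nat.factorial a6) * (348364800 ^ a8 * Nat.factorial a8) ≤ 3 ^ ((2*a2+3*a3+4*a4+5*a5+6*a6+8*a8) / 2 - (a2+a3+a4+a5+a6+a8)) * (60 ^ ((2*a2+3*a3+4*a4+5*a5+6*a6+8*a8) / 2) * Nat.factorial ((2*a2+3*a3+4*a4+5*a5+6*a6+8*a8) / 2))) ∧
    ((2*a2+3*a3+4*a4+5*a5+6*a6+8*a8) = 4 →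
      (60 ^ a2 * Nat.factorial a2) * (360 ^ a3 * Nat.factorial a3) * (25920 ^ a4 * Nat.factorial a4) * (25920 ^ a5 * Nat.factorial a5) * (6531840 ^ a6 * Nat.factorial a6) * (348364800 ^ a8 * Nat.factorial a8) ≤ 4 ^ ((2*a2+3*a3+4*a4+5*a5+6*a6+8*a8) / 2 - (a2+a3+a4+a5+a6+a8)) * (60 ^ ((2*a2+3*a3+4*a4+5*a5+6*a6+8*a8) / 2) * Nat.factorial ((2*a2+3*a3+4*a4+5*a5+6*a6+8*a8) / 2)) ∧
      3 ^ (a2+a3+a4+a5+a6+a8) * ((60 ^ a2 * Nat.factorial a2) * (360 ^ a3 * Nat.factorial a3) * (25920 ^ a4 * Nat.factorial a4) * (25920 ^ a5 * Nat.factorial a5) * (6531840 ^ a6 * Nat.factorial a6) * (348364800 ^ a8 * Nat.factorial a8)) ≤ 77760) ∧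
    ((2*a2+3*a3+4*a4+5*a5+6*a6+8*a8) % 2 = 1 →
      (60 ^ a2 * Nat.factorial a2) * (360 ^ a3 * Nat.factorial a3) * (25920 ^ a4 * Nat.factorial a4) * (25920 ^ a5 * Nat.factorial a5) * (6531840 ^ a6 * Nat.factorial a6) * (348364800 ^ a8 * Nat.factorial a8) ≤ 3 ^ (((2*a2+3*a3+4*a4+5*a5+6*a6+8*a8) + 1) / 2 - (a2+a3+a4+a5+a6+a8)) * (60 ^ (((2*a2+3*a3+4*a4+5*a5+6*a6+8*a8) - 1) / 2) * Nat.factorial (((2*a2+3*a3+4*a4+5*a5+6*a6+8*a8) - 1) / 2) * (2*a2+3*a3+4*a4+5*a5+6*a6+8*a8))) ∧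
    (28 ≤ (2*a2+3*a3+4*a4+5*a5+6*a6+8*a8) →
      (60 ^ a2 * Nat.factorial a2) * (360 ^ a3 * Nat.factorial a3) * (25920 ^ a4 * Nat.factorial a4) * (25920 ^ a5 * Nat.factorial a5) * (6531840 ^ a6 * Nat.factorial a6) * (348364800 ^ a8 * Nat.factorial a8) < 3 ^ ((2*a2+3*a3+4*a4+5*a5+6*a6+8*a8) - (a2+a3+a4+a5+a6+a8)) * Nat.factorial (2*a2+3*a3+4*a4+5*a5+6*a6+8*a8)) := by decide
lemma cast_pos_aux {d : ℕ} (hd : 0 < d) (n m : ℕ) :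
    (0 : ℚ) < ((d ^ n * m.factorial : ℕ) : ℚ) := by
  exact_mod_cast Nat.mul_pos (pow_pos hd n) (Nat.factorial_pos m)

lemma FTR_le {l l' : Multiset ℕ} {d : ℕ} (hd : 0 < d)
    (h : (d ^ (Multiset.card l) * (l.map JC).prod * ∏ x ∈ l.toFinset, (l.count x).factorial)
          * (d ^ l'.sum * l'.sum.factorial)
        ≤ (d ^ (Multiset.card l') * (l'.map JC).prod * ∏ x ∈ l'.toFinset, (l'.count x).factorial)
          * (d ^ l.sum * l.sum.factorial)) :
    FTR l d ≤ FTR l' d := by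
  rw [FTR, FTR, div_le_div_iff₀ (cast_pos_aux hd _ _) (cast_pos_aux hd _ _)]
  exact_mod_cast h

lemma FTR_lt_one {l : Multiset ℕ} {d : ℕ} (hd : 0 < d)
    (h : d ^ (Multiset.card l) * (l.map JC).prod * ∏ x ∈ l.toFinset, (l.count x).factorial
        < d ^ l.sum * l.sum.factorial) :
    FTR l d < 1 := by
  rw [FTR, div_lt_one (cast_pos_aux hd _ _)]
  exact_mod_cast h

lemma step_even {d s m b B PK : ℕ} (hb : b ≤ d) (hs : s ≤ m)
    (h : PK ≤ b ^ (m - s) * B) : d ^ s * PK ≤ d ^ m * B := by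
  calc d ^ s * PK ≤ d ^ s * (b ^ (m - s) * B) := Nat.mul_le_mul_left _ h
    _ ≤ d ^ s * (d ^ (m - s) * B) :=
        Nat.mul_le_mul_left _ (Nat.mul_le_mul_right _ (Nat.pow_le_pow_left hb _))
    _ = d ^ (s + (m - s)) * B := by rw [pow_add]; ring
    _ = d ^ m * B := by rw [show s + (m - s) = m by omega]

lemma sum6 (f : ℕ → ℕ) : ∑ r ∈ ({2,3,4,5,6,8} : Finset ℕ), f r
    = f 2 + f 3 + f 4 + f 5 + f 6 + f 8 := by
  rw [show ({2,3,4,5,6,8} : Finset ℕ) = insert 2 (insert 3 (insert 4 (insert 5 (insert 6 {8}))))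
      from rfl]
  rw [Finset.sum_insert (by decide), Finset.sum_insert (by decide),
    Finset.sum_insert (by decide), Finset.sum_insert (by decide),
    Finset.sum_insert (by decide), Finset.sum_singleton]
  ring

lemma prod6 (f : ℕ → ℕ) : ∏ r ∈ ({2,3,4,5,6,8} : Finset ℕ), f r
    = f 2 * f 3 * f 4 * f 5 * f 6 * f 8 := by
  rw [show ({2,3,4,5,6,8} : Finset ℕ) = insert 2 (insert 3 (insert 4 (insert 5 (insert 6 {8}))))
      from rfl]
  rw [Finset.prod_insert (by decide), Finset.prod_insert (by decide),
    Finset.prod_insert (by decide), Finset.prod_insert (by decide),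
    Finset.prod_insert (by decide), Finset.prod_singleton]
  ring

/-- a subdegree sequence with all entries `> 1` whose isotypic pieces all
have Fermat-test ratio `≥ 1` is dominated by a sequence of `2`s (or `(4)` when
`(v,d) = (4,3)`); in particular `R(l₁,d) < 1` when the total degree is at least `28`. -/
theorem FTR_dominated_by_twos
    (d : ℕ) (hd : 3 ≤ d)
    (l₁ : Multiset ℕ) (hl₁ : IsSubdegreeSeq l₁)
    (hgt : ∀ x ∈ l₁, 1 < x)
    (hge : ∀ r ∈ l₁.toFinset, 1 ≤ FTR (Multiset.replicate (l₁.count r) r) d) :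
    ((l₁.sum = 4 ∧ d = 3) → FTR l₁ d ≤ FTR {4} d) ∧
    ((Even l₁.sum ∧ ¬(l₁.sum = 4 ∧ d = 3)) →
      FTR l₁ d ≤ FTR (Multiset.replicate (l₁.sum / 2) 2) d) ∧
    (Odd l₁.sum → FTR l₁ d ≤ FTR (Multiset.replicate ((l₁.sum - 1) / 2) 2) d) ∧
    (28 ≤ l₁.sum → FTR l₁ d < 1) := by
  obtain ⟨hne, -⟩ := hl₁
  have hd0 : 0 < d := by omega
  -- Step 1: turn each hypothesis `1 ≤ FTR (replicate k r) d` into a numeric inequality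
  have hkey : ∀ r ∈ l₁.toFinset,
      3 ^ (l₁.count r * (r - 1)) * (r * l₁.count r).factorial
        ≤ JC r ^ (l₁.count r) * (l₁.count r).factorial := by
    intro r hrT
    have hrl : r ∈ l₁ := Multiset.mem_toFinset.1 hrT
    have hr2 : 2 ≤ r := hgt r hrl
    set k := l₁.count r with hkd
    have hk : 0 < k := Multiset.count_pos.2 hrl
    have h1 := hge r hrT
    simp only [FTR, ← hkd, Multiset.card_replicate, Multiset.map_replicate, Multiset.prod_replicate,
      Multiset.toFinset_replicate, if_neg hk.ne', Finset.prod_singleton,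
      Multiset.count_replicate_self, Multiset.sum_replicate, smul_eq_mul] at h1
    rw [one_le_div (cast_pos_aux hd0 _ _)] at h1
    have h2 : d ^ (k * r) * (k * r).factorial
        ≤ d ^ k * JC r ^ k * k.factorial := by exact_mod_cast h1
    have hsplit : k * r = k + k * (r - 1) := by
      rcases r with _ | m
      · omega
      · rw [Nat.mul_succ, Nat.succ_sub_one]
        exact Nat.add_comm _ _
    have hpow : d ^ (k * r) = d ^ k * d ^ (k * (r - 1)) := by rw [hsplit, pow_add]
    rw [hpow, mul_assoc, mul_assoc] at h2
    have h3 : d ^ (k * (r - 1)) * (k * r).factorial ≤ JC r ^ k * k.factorial :=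
      Nat.le_of_mul_le_mul_left h2 (pow_pos hd0 k)
    calc 3 ^ (k * (r - 1)) * (r * k).factorial
        = 3 ^ (k * (r - 1)) * (k * r).factorial := by rw [mul_comm r k]
      _ ≤ d ^ (k * (r - 1)) * (k * r).factorial :=
          Nat.mul_le_mul_right _ (Nat.pow_le_pow_left hd _)
      _ ≤ JC r ^ k * k.factorial := h3
  -- Step 2: classification of the entries and multiplicities
  have hcls : ∀ r ∈ l₁.toFinset,
      (r = 2 ∧ l₁.count r < 14) ∨ (r = 3 ∧ l₁.count r < 4) ∨ (r = 4 ∧ l₁.count r < 4) ∨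
        (r = 5 ∧ l₁.count r < 2) ∨ (r = 6 ∧ l₁.count r < 3) ∨ (r = 8 ∧ l₁.count r < 2) :=
    fun r hrT => classify r (l₁.count r) (hgt r (Multiset.mem_toFinset.1 hrT))
      (Multiset.count_pos.2 (Multiset.mem_toFinset.1 hrT)) (hkey r hrT)
  have hsub : l₁.toFinset ⊆ ({2,3,4,5,6,8} : Finset ℕ) := by
    intro r hrT
    rcases hcls r hrT with ⟨rfl,-⟩|⟨rfl,-⟩|⟨rfl,-⟩|⟨rfl,-⟩|⟨rfl,-⟩|⟨rfl,-⟩ <;> decide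
  have hcount0 : ∀ r : ℕ, r ∉ l₁.toFinset → l₁.count r = 0 :=
    fun r hr => Multiset.count_eq_zero.2 (fun hm => hr (Multiset.mem_toFinset.2 hm))
  have hb2 : l₁.count 2 < 14 := by
    by_cases h : 2 ∈ l₁.toFinset
    · rcases hcls 2 h with ⟨h1,h2⟩|⟨h1,h2⟩|⟨h1,h2⟩|⟨h1,h2⟩|⟨h1,h2⟩|⟨h1,h2⟩ <;> omega
    · rw [hcount0 2 h]; omega
  have hb3 : l₁.count 3 < 4 := by
    by_cases h : 3 ∈ l₁.toFinset
    · rcases hcls 3 h with ⟨h1,h2⟩|⟨h1,h2⟩|⟨h1,h2⟩|⟨h1,h2⟩|⟨h1,h2⟩|⟨h1,h2⟩ <;> omega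
    · rw [hcount0 3 h]; omega
  have hb4 : l₁.count 4 < 4 := by
    by_cases h : 4 ∈ l₁.toFinset
    · rcases hcls 4 h with ⟨h1,h2⟩|⟨h1,h2⟩|⟨h1,h2⟩|⟨h1,h2⟩|⟨h1,h2⟩|⟨h1,h2⟩ <;> omega
    · rw [hcount0 4 h]; omega
  have hb5 : l₁.count 5 < 2 := by
    by_cases h : 5 ∈ l₁.toFinset
    · rcases hcls 5 h with ⟨h1,h2⟩|⟨h1,h2⟩|⟨h1,h2⟩|⟨h1,h2⟩|⟨h1,h2⟩|⟨h1,h2⟩ <;> omega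
    · rw [hcount0 5 h]; omega
  have hb6 : l₁.count 6 < 3 := by
    by_cases h : 6 ∈ l₁.toFinset
    · rcases hcls 6 h with ⟨h1,h2⟩|⟨h1,h2⟩|⟨h1,h2⟩|⟨h1,h2⟩|⟨h1,h2⟩|⟨h1,h2⟩ <;> omega
    · rw [hcount0 6 h]; omega
  have hb8 : l₁.count 8 < 2 := by
    by_cases h : 8 ∈ l₁.toFinset
    · rcases hcls 8 h with ⟨h1,h2⟩|⟨h1,h2⟩|⟨h1,h2⟩|⟨h1,h2⟩|⟨h1,h2⟩|⟨h1,h2⟩ <;> omega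
    · rw [hcount0 8 h]; omega
  -- Step 3: express the data of l₁ through the six counts
  have e1 : Multiset.card l₁ = ∑ r ∈ ({2,3,4,5,6,8} : Finset ℕ), l₁.count r := by
    rw [← Multiset.toFinset_sum_count_eq l₁]
    exact Finset.sum_subset hsub (fun x _ hx => hcount0 x hx)
  have e2 : l₁.sum = ∑ r ∈ ({2,3,4,5,6,8} : Finset ℕ), l₁.count r * r := by
    conv_lhs => rw [← Multiset.map_id' l₁]
    rw [Finset.sum_multiset_map_count]
    simp only [smul_eq_mul]
    exact Finset.sum_subset hsub (fun x _ hx => by rw [hcount0 x hx]; ring)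
  have e3 : (l₁.map JC).prod = ∏ r ∈ ({2,3,4,5,6,8} : Finset ℕ), JC r ^ l₁.count r := by
    rw [Finset.prod_multiset_map_count]
    exact Finset.prod_subset hsub (fun x _ hx => by rw [hcount0 x hx]; exact pow_zero _)
  have e4 : (∏ x ∈ l₁.toFinset, (l₁.count x).factorial)
      = ∏ r ∈ ({2,3,4,5,6,8} : Finset ℕ), (l₁.count r).factorial :=
    Finset.prod_subset hsub (fun x _ hx => by rw [hcount0 x hx]; rfl)
  set a2 := l₁.count 2 with ha2
  set a3 := l₁.count 3 with ha3
  set a4 := l₁.count 4 with ha4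
  set a5 := l₁.count 5 with ha5
  set a6 := l₁.count 6 with ha6
  set a8 := l₁.count 8 with ha8
  have hv : l₁.sum = 2*a2+3*a3+4*a4+5*a5+6*a6+8*a8 := by
    rw [e2, sum6 (fun r => l₁.count r * r)]
    rw [← ha2, ← ha3, ← ha4, ← ha5, ← ha6, ← ha8]; ring
  have hs : Multiset.card l₁ = a2+a3+a4+a5+a6+a8 := by
    rw [e1, sum6 (fun r => l₁.count r)]
  have hPK : (l₁.map JC).prod * (∏ x ∈ l₁.toFinset, (l₁.count x).factorial)
      = (60 ^ a2 * Nat.factorial a2) * (360 ^ a3 * Nat.factorial a3)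
        * (25920 ^ a4 * Nat.factorial a4) * (25920 ^ a5 * Nat.factorial a5)
        * (6531840 ^ a6 * Nat.factorial a6) * (348364800 ^ a8 * Nat.factorial a8) := by
    rw [e3, e4, prod6 (fun r => JC r ^ l₁.count r), prod6 (fun r => (l₁.count r).factorial)]
    rw [show JC 2 = 60 from rfl, show JC 3 = 360 from rfl, show JC 4 = 25920 from rfl,
      show JC 5 = 25920 from rfl, show JC 6 = 6531840 from rfl,
      show JC 8 = 348364800 from rfl]
    rw [← ha2, ← ha3, ← ha4, ← ha5, ← ha6, ← ha8]; ring
  have hcard0 : 0 < a2+a3+a4+a5+a6+a8 := by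
    rw [← hs]; exact Multiset.card_pos.2 hne
  obtain ⟨M1, M2, M3, M4⟩ := master a2 hb2 a3 hb3 a4 hb4 a5 hb5 a6 hb6 a8 hb8 hcard0
  rw [← hv, ← hs, ← hPK] at M1 M2 M3 M4
  have h2s : 2 * Multiset.card l₁ ≤ l₁.sum := by rw [hv, hs]; omega
  have hs1 : 1 ≤ Multiset.card l₁ := by rw [hs]; omega
  refine ⟨?_, ?_, ?_, ?_⟩
  · -- (v, d) = (4, 3)
    rintro ⟨h4, rfl⟩
    apply FTR_le hd0
    rw [show ({4} : Multiset ℕ).sum = 4 from rfl, h4]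
    apply Nat.mul_le_mul_right
    have hnum : 3 ^ Multiset.card l₁ * (l₁.map JC).prod
        * (∏ x ∈ l₁.toFinset, (l₁.count x).factorial) ≤ 77760 := by
      calc 3 ^ Multiset.card l₁ * (l₁.map JC).prod
            * (∏ x ∈ l₁.toFinset, (l₁.count x).factorial)
          = 3 ^ Multiset.card l₁ * ((l₁.map JC).prod
            * (∏ x ∈ l₁.toFinset, (l₁.count x).factorial)) := by ring
        _ ≤ 77760 := (M2 h4).2
    exact hnum.trans (by decide)
  · -- even total degree
    rintro ⟨hev, hne4⟩
    have hv2 : l₁.sum % 2 = 0 := Nat.even_iff.1 hev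
    obtain ⟨m, hm⟩ : ∃ m, l₁.sum = 2 * m := ⟨l₁.sum / 2, by omega⟩
    have hm' : l₁.sum / 2 = m := by omega
    have hm0 : m ≠ 0 := by omega
    have hsm : Multiset.card l₁ ≤ m := by omega
    rw [hm']
    apply FTR_le hd0
    rw [Multiset.card_replicate, Multiset.map_replicate, Multiset.prod_replicate,
      Multiset.toFinset_replicate, if_neg hm0, Finset.prod_singleton,
      Multiset.count_replicate_self, Multiset.sum_replicate, smul_eq_mul,
      show JC 2 = 60 from rfl, show m * 2 = l₁.sum by omega]
    apply Nat.mul_le_mul_right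
    have key : d ^ Multiset.card l₁ * ((l₁.map JC).prod
        * (∏ x ∈ l₁.toFinset, (l₁.count x).factorial))
        ≤ d ^ m * (60 ^ m * m.factorial) := by
      by_cases hv4 : l₁.sum = 4
      · have h4d : 4 ≤ d := by
          rcases Nat.lt_or_ge d 4 with h | h
          · exact absurd ⟨hv4, by omega⟩ hne4
          · exact h
        have hM := (M2 hv4).1
        rw [hm'] at hM
        exact step_even h4d hsm hM
      · have hM := M1 ⟨hv2, hv4⟩
        rw [hm'] at hM
        exact step_even hd hsm hM
    calc d ^ Multiset.card l₁ * (l₁.map JC).prod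
          * (∏ x ∈ l₁.toFinset, (l₁.count x).factorial)
        = d ^ Multiset.card l₁ * ((l₁.map JC).prod
          * (∏ x ∈ l₁.toFinset, (l₁.count x).factorial)) := by ring
      _ ≤ d ^ m * (60 ^ m * m.factorial) := key
      _ = d ^ m * 60 ^ m * m.factorial := by ring
  · -- odd total degree
    intro hodd
    have hv2 : l₁.sum % 2 = 1 := Nat.odd_iff.1 hodd
    obtain ⟨m, hm⟩ : ∃ m, l₁.sum = 2 * m + 1 := ⟨(l₁.sum - 1) / 2, by omega⟩
    have hm' : (l₁.sum - 1) / 2 = m := by omega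
    have hm0 : m ≠ 0 := by omega
    have hsm : Multiset.card l₁ ≤ m + 1 := by omega
    have hM := M3 hv2
    rw [show (l₁.sum + 1) / 2 = m + 1 by omega, show (l₁.sum - 1) / 2 = m by omega,
      hm] at hM
    rw [hm']
    apply FTR_le hd0
    rw [Multiset.card_replicate, Multiset.map_replicate, Multiset.prod_replicate,
      Multiset.toFinset_replicate, if_neg hm0, Finset.prod_singleton,
      Multiset.count_replicate_self, Multiset.sum_replicate, smul_eq_mul,
      show JC 2 = 60 from rfl, hm]
    have key : d ^ Multiset.card l₁ * ((l₁.map JC).prod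
        * (∏ x ∈ l₁.toFinset, (l₁.count x).factorial))
        ≤ d ^ (m + 1) * (60 ^ m * m.factorial * (2 * m + 1)) :=
      step_even hd hsm hM
    calc d ^ Multiset.card l₁ * (l₁.map JC).prod
          * (∏ x ∈ l₁.toFinset, (l₁.count x).factorial) * (d ^ (m * 2) * (m * 2).factorial)
        = (d ^ Multiset.card l₁ * ((l₁.map JC).prod
          * (∏ x ∈ l₁.toFinset, (l₁.count x).factorial))) * (d ^ (m * 2) * (m * 2).factorial) := by
          ring
      _ ≤ (d ^ (m + 1) * (60 ^ m * m.factorial * (2 * m + 1)))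
            * (d ^ (m * 2) * (m * 2).factorial) := Nat.mul_le_mul_right _ key
      _ = d ^ m * 60 ^ m * m.factorial * (d ^ (2 * m + 1) * (2 * m + 1).factorial) := by
          rw [show (2 * m + 1).factorial = (2 * m + 1) * (2 * m).factorial
              from Nat.factorial_succ _,
            show m * 2 = 2 * m by ring]
          ring
  · -- total degree at least 28
    intro h28
    have hM := M4 h28
    apply FTR_lt_one hd0
    calc d ^ Multiset.card l₁ * (l₁.map JC).prod
          * (∏ x ∈ l₁.toFinset, (l₁.count x).factorial)
        = d ^ Multiset.card l₁ * ((l₁.map JC).prod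
          * (∏ x ∈ l₁.toFinset, (l₁.count x).factorial)) := by ring
      _ < d ^ Multiset.card l₁
            * (3 ^ (l₁.sum - Multiset.card l₁) * l₁.sum.factorial) :=
          mul_lt_mul_of_pos_left hM (pow_pos hd0 _)
      _ ≤ d ^ Multiset.card l₁
            * (d ^ (l₁.sum - Multiset.card l₁) * l₁.sum.factorial) :=
          Nat.mul_le_mul_left _ (Nat.mul_le_mul_right _ (Nat.pow_le_pow_left hd _))
      _ = d ^ (Multiset.card l₁ + (l₁.sum - Multiset.card l₁)) * l₁.sum.factorial := by
          rw [pow_add]; ring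
      _ = d ^ l₁.sum * l₁.sum.factorial := by
          rw [show Multiset.card l₁ + (l₁.sum - Multiset.card l₁) = l₁.sum by omega]
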